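/- Without the feature-independence assumption, the global sufficient value function need not be supermodular: let F = {0,1}², f(x₁,x₂) = x₁, and let D be the distribution with Pr(0,0) = 2/5, Pr(0,1) = 1/5, Pr(1,0) = 1/10, Pr(1,1) = 3/10. Then v^g_suff({2}) − v^g_suff(∅) = 2/25 > 0 = v^g_suff({1,2}) − v^g_suff({1}), so v^g_suff is not supermodular (take S = ∅ ⊆ S' = {1} and i = 2). -/

import Mathlib

open Finset

open Classical in
/-- Conditional probability `Pr(A | B) = Pr(A ∩ B) / Pr(B)` over a finite space,
with mass function `P`. -/
noncomputable def condPr {F : Type*} [Fintype F] (P : F → ℝ) (A B : F → Prop) : ℝ :=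
  (∑ z, if A z ∧ B z then P z else 0) / (∑ z, if B z then P z else 0)

open Classical in
/-- The global sufficient value function on `{0,1}^n`:
`v^g_suff(S) = Σ_{x : P x > 0} P x · Pr_{z∼D}(f z = f x | z_S = x_S)`. -/
noncomputable def vgSuff {n : ℕ} (f : (Fin n → Bool) → Bool)
    (P : (Fin n → Bool) → ℝ) (S : Finset (Fin n)) : ℝ :=
  ∑ x ∈ Finset.univ.filter (fun x => 0 < P x),
    P x * condPr P (fun z => f z = f x) (fun z => ∀ i ∈ S, z i = x i)

lemma sum_pi2' (g : (Fin 2 → Bool) → ℝ) :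
    ∑ z, g z = g ![false,false] + g ![false,true] + g ![true,false] + g ![true,true] := by
  rw [← (piFinTwoEquiv fun _ => Bool).symm.sum_comp g]
  simp [Fintype.sum_prod_type, piFinTwoEquiv]
  have : (![] : Fin 0 → Bool) = finZeroElim := Subsingleton.elim _ _
  ring

/-- without feature independence, `v^g_suff` need not be
supermodular.  With `F = {0,1}²` (feature 1 is index `0`, feature 2 is index
`1`), `f(x₁,x₂) = x₁`, and `Pr(0,0) = 2/5, Pr(0,1) = 1/5, Pr(1,0) = 1/10,
Pr(1,1) = 3/10`, we have `v^g_suff({2}) − v^g_suff(∅) = 2/25 > 0 =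
v^g_suff({1,2}) − v^g_suff({1})`, so `v^g_suff` is not supermodular
(take `S = ∅ ⊆ S' = {1}` and `i = 2`). -/
theorem vgSuff_not_supermodular_without_independence :
    let f : (Fin 2 → Bool) → Bool := fun z => z 0
    let P : (Fin 2 → Bool) → ℝ := fun z =>
      if z 0 = false ∧ z 1 = false then 2 / 5
      else if z 0 = false ∧ z 1 = true then 1 / 5
      else if z 0 = true ∧ z 1 = false then 1 / 10
      else 3 / 10
    vgSuff f P {1} - vgSuff f P (∅ : Finset (Fin 2)) = 2 / 25 ∧
    (0 : ℝ) < 2 / 25 ∧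
    vgSuff f P {0, 1} - vgSuff f P {0} = 0 ∧
    ¬ (∀ (S S' : Finset (Fin 2)) (i : Fin 2), S ⊆ S' → i ∉ S' →
        vgSuff f P (insert i S) - vgSuff f P S ≤
          vgSuff f P (insert i S') - vgSuff f P S') := by
  intro f P
  have hP : ∀ x, 0 < P x := by
    intro x; cases h0 : x 0 <;> cases h1 : x 1 <;> simp [P, h0, h1] <;> norm_num
  have hfilter : Finset.univ.filter (fun x => 0 < P x) = Finset.univ :=
    Finset.filter_true_of_mem (fun x _ => hP x)
  have h1 : vgSuff f P {1} = 3/5 := by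
    rw [vgSuff, hfilter, sum_pi2']
    simp only [condPr, sum_pi2']
    norm_num [f, P, Finset.mem_singleton, Finset.mem_insert, Matrix.cons_val_zero,
      Matrix.cons_val_one, Matrix.head_cons]
  have h0 : vgSuff f P ∅ = 13/25 := by
    rw [vgSuff, hfilter, sum_pi2']
    simp only [condPr, sum_pi2']
    norm_num [f, P, Finset.mem_singleton, Finset.mem_insert, Matrix.cons_val_zero,
      Matrix.cons_val_one, Matrix.head_cons]
  have h01 : vgSuff f P {0,1} = 1 := by
    rw [vgSuff, hfilter, sum_pi2']
    simp only [condPr, sum_pi2']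
    norm_num [f, P, Finset.mem_singleton, Finset.mem_insert, Matrix.cons_val_zero,
      Matrix.cons_val_one, Matrix.head_cons]
  have h0' : vgSuff f P {0} = 1 := by
    rw [vgSuff, hfilter, sum_pi2']
    simp only [condPr, sum_pi2']
    norm_num [f, P, Finset.mem_singleton, Finset.mem_insert, Matrix.cons_val_zero,
      Matrix.cons_val_one, Matrix.head_cons]
  refine ⟨by rw [h1, h0]; norm_num, by norm_num, by rw [h01, h0']; norm_num, ?_⟩
  intro h
  have := h ∅ {0} 1 (Finset.empty_subset _) (by decide)
  rw [show insert (1:Fin 2) ∅ = ({1} : Finset (Fin 2)) from rfl,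
    show insert (1:Fin 2) {0} = ({0,1} : Finset (Fin 2)) by decide] at this
  rw [h1, h0, h01, h0'] at this
  norm_num at this
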